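/- Let F : ℂ × ℂ → ℂ be holomorphic on all of ℂ² and suppose F(z, conj z) = 0 for every z ∈ ℂ. Then F is identically zero on ℂ². -/

import Mathlib

open Complex ComplexConjugate

/-- An entire function vanishing on the reals vanishes identically. -/
lemma entire_zero_of_real_zero (f : ℂ → ℂ) (hf : Differentiable ℂ f)
    (h : ∀ x : ℝ, f x = 0) : ∀ z : ℂ, f z = 0 := by
  have hA : AnalyticOnNhd ℂ f Set.univ := analyticOnNhd_univ_iff_differentiable.2 hf
  have hfreq : ∃ᶠ z in nhdsWithin (0 : ℂ) {(0 : ℂ)}ᶜ, f z = 0 := by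
    have htend : Filter.Tendsto (fun n : ℕ => (↑((1 : ℝ) / (n + 1)) : ℂ))
        Filter.atTop (nhdsWithin (0 : ℂ) {(0 : ℂ)}ᶜ) := by
      apply tendsto_nhdsWithin_of_tendsto_nhds_of_eventually_within
      · have h0 : Filter.Tendsto (fun n : ℕ => (1 : ℝ) / (n + 1)) Filter.atTop (nhds 0) :=
          tendsto_one_div_add_atTop_nhds_zero_nat
        have := (Complex.continuous_ofReal.tendsto 0).comp h0
        exact Filter.Tendsto.congr (fun n => rfl) this
      · refine Filter.Eventually.of_forall fun n => ?_
        simp only [Set.mem_compl_iff, Set.mem_singleton_iff]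
        intro hc
        have h1 : ((1 : ℝ) / (n + 1)) = 0 := by exact_mod_cast hc
        have h2 : (0 : ℝ) < 1 / (n + 1) := by positivity
        linarith
    exact htend.frequently ((Filter.Eventually.of_forall fun n : ℕ => h ((1 : ℝ) / (n + 1))).frequently)
  intro z
  exact hA.eqOn_zero_of_preconnected_of_frequently_eq_zero isPreconnected_univ
    (Set.mem_univ 0) hfreq (Set.mem_univ z)

/-- an entire function on `ℂ²` vanishing on the maximally totally real set
`{(z, conj z) : z ∈ ℂ}` vanishes identically. -/
theorem stmt5 (F : ℂ × ℂ → ℂ) (hF : Differentiable ℂ F)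
    (hvan : ∀ z : ℂ, F (z, conj z) = 0) :
    ∀ w : ℂ × ℂ, F w = 0 := by
  set G : ℂ → ℂ → ℂ := fun u v => F (u + I * v, u - I * v) with hG
  have hreal : ∀ (u v : ℝ), G u v = 0 := by
    intro u v
    have h1 : conj ((u : ℂ) + I * v) = (u : ℂ) - I * v := by
      simp [map_add, map_mul, Complex.conj_ofReal, Complex.conj_I]
      ring
    have := hvan ((u : ℂ) + I * v)
    rw [h1] at this
    simpa [hG] using this
  -- step 1: extend in the first variable
  have step1 : ∀ (u : ℂ) (v : ℝ), G u v = 0 := by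
    intro u v
    have hd : Differentiable ℂ (fun u : ℂ => G u v) := by
      apply hF.comp
      exact Differentiable.prodMk (differentiable_id.add_const _) (differentiable_id.sub_const _)
    exact entire_zero_of_real_zero _ hd (fun x => hreal x v) u
  -- step 2: extend in the second variable
  have step2 : ∀ (u v : ℂ), G u v = 0 := by
    intro u v
    have hd : Differentiable ℂ (fun v : ℂ => G u v) := by
      apply hF.comp
      exact Differentiable.prodMk ((differentiable_const u).add (differentiable_id.const_mul I))
        ((differentiable_const u).sub (differentiable_id.const_mul I))
    exact entire_zero_of_real_zero _ hd (fun x => step1 u x) v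
  rintro ⟨a, b⟩
  have := step2 ((a + b) / 2) ((a - b) / (2 * I))
  have h1 : (a + b) / 2 + I * ((a - b) / (2 * I)) = a := by
    field_simp
    ring
  have h2 : (a + b) / 2 - I * ((a - b) / (2 * I)) = b := by
    field_simp
    ring
  rw [hG] at this
  simp only [h1, h2] at this
  exact this
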